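/- Let d ≥ 1 and let k, q : ℝ^d → [0,∞) be integrable functions each of which is radial and non-increasing (i.e., k(x) = k₀(|x|) and q(x) = q₀(|x|) with k₀, q₀ non-increasing on [0,∞)). Then the convolution k * q is also radial and non-increasing: for all x, y ∈ ℝ^d with |x| ≥ |y|, (k*q)(x) ≤ (k*q)(y). -/

import Mathlib

open MeasureTheory RealInnerProductSpace

private lemma sqle17 (a b : ℝ) (_ : 0 ≤ a) (hb : 0 ≤ b) (h : a^2 ≤ b^2) : a ≤ b := by nlinarith

private lemma sqeq17 (a b : ℝ) (ha : 0 ≤ a) (hb : 0 ≤ b) (h : a^2 = b^2) : a = b := by nlinarith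

private lemma geo17 {E : Type*} [NormedAddCommGroup E] [InnerProductSpace ℝ E]
    (x y z : E) (hne : x ≠ y) (hxy : ‖y‖ ≤ ‖x‖) (w : E)
    (hw : w = z - ((2 * ⟪z, x - y⟫ - ⟪x + y, x - y⟫) / ‖x - y‖ ^ 2) • (x - y)) :
      ‖x - w‖ = ‖y - z‖ ∧ ‖y - w‖ = ‖x - z‖ ∧
      ((‖y - z‖ ≤ ‖x - z‖ ∧ ‖z‖ ≤ ‖w‖) ∨ (‖x - z‖ ≤ ‖y - z‖ ∧ ‖w‖ ≤ ‖z‖)) := by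
  set u : E := x - y with hu
  have hu0 : u ≠ 0 := sub_ne_zero.mpr hne
  have hU : (0:ℝ) < ‖u‖ ^ 2 := pow_pos (norm_pos_iff.mpr hu0) 2
  set a : ℝ := ⟪x, u⟫ with ha
  set b : ℝ := ⟪y, u⟫ with hb
  set c : ℝ := ⟪z, u⟫ with hc
  set r : ℝ := (2 * c - ⟪x + y, u⟫) / ‖u‖ ^ 2 with hrdef
  have hab : ‖u‖ ^ 2 = a - b := by
    rw [ha, hb, ← inner_sub_left, ← hu, real_inner_self_eq_norm_sq]
  have habpos : 0 < a - b := hab ▸ hU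
  have hxyab : ⟪x + y, u⟫ = a + b := by rw [ha, hb, ← inner_add_left]
  have hr : r * (a - b) = 2 * c - a - b := by
    rw [hrdef, hxyab, hab]; field_simp; ring
  have habnn : 0 ≤ a + b := by
    have : a + b = ‖x‖ ^ 2 - ‖y‖ ^ 2 := by
      rw [ha, hb, ← inner_add_left, hu, inner_sub_right, inner_add_left, inner_add_left,
        real_inner_self_eq_norm_sq, real_inner_self_eq_norm_sq, real_inner_comm x y]
      ring
    have h2 : ‖y‖ ^ 2 ≤ ‖x‖ ^ 2 := by
      have := norm_nonneg y; nlinarith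
    linarith
  have hwz : w = z - r • u := by rw [hw, hrdef]
  clear_value a b c r
  have hxw : x - w = (x - z) + r • u := by rw [hwz]; abel
  have hyw : y - w = (y - z) + r • u := by rw [hwz]; abel
  have hyzr : y - z = (x - z) - u := by rw [hu]; abel
  have hxzr : x - z = (y - z) + u := by rw [hu]; abel
  have hiaxz : ⟪x - z, u⟫ = a - c := by rw [ha, hc, inner_sub_left]
  have hiayz : ⟪y - z, u⟫ = b - c := by rw [hb, hc, inner_sub_left]
  have hru : ‖r • u‖ ^ 2 = r ^ 2 * (a - b) := by
    rw [norm_smul, mul_pow, hab]; simp [sq_abs]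
  have e1 : ‖x - w‖ ^ 2 = ‖x - z‖ ^ 2 + 2 * r * (a - c) + r ^ 2 * (a - b) := by
    rw [hxw, @norm_add_sq_real, real_inner_smul_right, hiaxz, hru]; ring
  have e2 : ‖y - z‖ ^ 2 = ‖x - z‖ ^ 2 - 2 * (a - c) + (a - b) := by
    rw [hyzr, @norm_sub_sq_real, hiaxz, hab]
  have e3 : ‖y - w‖ ^ 2 = ‖y - z‖ ^ 2 + 2 * r * (b - c) + r ^ 2 * (a - b) := by
    rw [hyw, @norm_add_sq_real, real_inner_smul_right, hiayz, hru]; ring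
  have e4 : ‖x - z‖ ^ 2 = ‖y - z‖ ^ 2 + 2 * (b - c) + (a - b) := by
    rw [hxzr, @norm_add_sq_real, hiayz, hab]
  have e5 : ‖w‖ ^ 2 = ‖z‖ ^ 2 - 2 * r * c + r ^ 2 * (a - b) := by
    rw [hwz, @norm_sub_sq_real, real_inner_smul_right, ← hc, hru]; ring
  refine ⟨sqeq17 _ _ (norm_nonneg _) (norm_nonneg _) ?_,
    sqeq17 _ _ (norm_nonneg _) (norm_nonneg _) ?_, ?_⟩
  · rw [e1, e2]; linear_combination (r + 1) * hr
  · rw [e3, e4]; linear_combination (r - 1) * hr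
  · have d1 : ‖x - z‖ ^ 2 - ‖y - z‖ ^ 2 = -(r * (a - b)) := by
      linear_combination (-1) * e2 + hr
    have d2 : ‖w‖ ^ 2 - ‖z‖ ^ 2 = -(r * (a + b)) := by
      linear_combination e5 + r * hr
    rcases le_total r 0 with h | h
    · exact Or.inl ⟨sqle17 _ _ (norm_nonneg _) (norm_nonneg _)
        (by linarith [mul_nonneg (neg_nonneg.mpr h) habpos.le]),
        sqle17 _ _ (norm_nonneg _) (norm_nonneg _)
        (by linarith [mul_nonneg (neg_nonneg.mpr h) habnn])⟩
    · exact Or.inr ⟨sqle17 _ _ (norm_nonneg _) (norm_nonneg _)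
        (by linarith [mul_nonneg h habpos.le]),
        sqle17 _ _ (norm_nonneg _) (norm_nonneg _)
        (by linarith [mul_nonneg h habnn])⟩

noncomputable def conv17 (d : ℕ) (f g : EuclideanSpace ℝ (Fin d) → ℝ)
    (x : EuclideanSpace ℝ (Fin d)) : ℝ :=
  ∫ y, f (x - y) * g y

theorem stmt17 (d : ℕ) (k q : EuclideanSpace ℝ (Fin d) → ℝ)
    (hknn : ∀ x, 0 ≤ k x) (hqnn : ∀ x, 0 ≤ q x)
    (hkint : Integrable k) (hqint : Integrable q)
    (hk : ∀ x y : EuclideanSpace ℝ (Fin d), ‖y‖ ≤ ‖x‖ → k x ≤ k y)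
    (hq : ∀ x y : EuclideanSpace ℝ (Fin d), ‖y‖ ≤ ‖x‖ → q x ≤ q y) :
    ∀ x y : EuclideanSpace ℝ (Fin d), ‖y‖ ≤ ‖x‖ →
      conv17 d k q x ≤ conv17 d k q y := by
  intro x y hxy
  by_cases hne : x = y
  · subst hne; exact le_rfl
  set u : EuclideanSpace ℝ (Fin d) := x - y with hu
  have hu0 : u ≠ 0 := sub_ne_zero.mpr hne
  set R : EuclideanSpace ℝ (Fin d) ≃ₗᵢ[ℝ] EuclideanSpace ℝ (Fin d) :=
    (Submodule.reflection (ℝ ∙ u) : EuclideanSpace ℝ (Fin d) ≃ₗᵢ[ℝ] EuclideanSpace ℝ (Fin d)).trans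
      (LinearIsometryEquiv.neg ℝ) with hR
  set cvec : EuclideanSpace ℝ (Fin d) := (⟪x + y, u⟫ / ‖u‖ ^ 2) • u with hcvec
  set σ : EuclideanSpace ℝ (Fin d) → EuclideanSpace ℝ (Fin d) :=
    fun z => R z + cvec with hσdef
  have hσ : ∀ z, σ z = z - ((2 * ⟪z, u⟫ - ⟪x + y, u⟫) / ‖u‖ ^ 2) • u := by
    intro z
    have hRz : R z = z - ((2 * ⟪z, u⟫) / ‖u‖ ^ 2) • u := by
      rw [hR]
      simp only [LinearIsometryEquiv.trans_apply, LinearIsometryEquiv.coe_neg,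
        Submodule.reflection_singleton_apply]
      rw [real_inner_comm u z]
      simp only [RCLike.ofReal_real_eq_id, id_eq]
      module
    show R z + cvec = _
    rw [hRz, hcvec, sub_div, sub_smul]
    module
  have hmp : MeasurePreserving σ
      (volume : Measure (EuclideanSpace ℝ (Fin d))) volume :=
    (measurePreserving_add_right volume cvec).comp R.measurePreserving
  have hemb : MeasurableEmbedding σ := by
    have h1 : MeasurableEmbedding (fun w : EuclideanSpace ℝ (Fin d) => w + cvec) :=
      (MeasurableEquiv.addRight cvec).measurableEmbedding
    exact h1.comp R.toHomeomorph.measurableEmbedding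
  have hkbd : ∀ v : EuclideanSpace ℝ (Fin d), ‖k v‖ ≤ k 0 := by
    intro v
    rw [Real.norm_eq_abs, abs_of_nonneg (hknn v)]
    exact hk v 0 (by simp)
  have haes : ∀ v : EuclideanSpace ℝ (Fin d),
      AEStronglyMeasurable (fun z : EuclideanSpace ℝ (Fin d) => k (v - z)) volume := fun v =>
    hkint.aestronglyMeasurable.comp_quasiMeasurePreserving
      (Measure.measurePreserving_sub_left volume v).quasiMeasurePreserving
  have hint : ∀ v : EuclideanSpace ℝ (Fin d),
      Integrable (fun z : EuclideanSpace ℝ (Fin d) => k (v - z) * q z) := fun v =>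
    hqint.bdd_mul (haes v) (Filter.Eventually.of_forall fun z => hkbd _)
  have hfσ : Integrable (fun z => k (x - σ z) * q (σ z)) :=
    (hmp.integrable_comp_emb hemb).mpr (hint x)
  have hgσ : Integrable (fun z => k (y - σ z) * q (σ z)) :=
    (hmp.integrable_comp_emb hemb).mpr (hint y)
  have hfσint : ∫ z, k (x - σ z) * q (σ z) = ∫ z, k (x - z) * q z :=
    hmp.integral_comp hemb (fun z => k (x - z) * q z)
  have hgσint : ∫ z, k (y - σ z) * q (σ z) = ∫ z, k (y - z) * q z :=
    hmp.integral_comp hemb (fun z => k (y - z) * q z)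
  have key : ∀ z, k (x - z) * q z + k (x - σ z) * q (σ z) ≤
      k (y - z) * q z + k (y - σ z) * q (σ z) := by
    intro z
    obtain ⟨hA, hB, hC⟩ := geo17 x y z hne hxy (σ z) (hσ z)
    have ekx : k (x - σ z) = k (y - z) :=
      le_antisymm (hk _ _ hA.ge) (hk _ _ hA.le)
    have eky : k (y - σ z) = k (x - z) :=
      le_antisymm (hk _ _ hB.ge) (hk _ _ hB.le)
    rw [ekx, eky]
    rcases hC with ⟨h1, h2⟩ | ⟨h1, h2⟩
    · have kk : k (x - z) ≤ k (y - z) := hk _ _ h1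
      have qq : q (σ z) ≤ q z := hq _ _ h2
      nlinarith [hqnn z, hqnn (σ z)]
    · have kk : k (y - z) ≤ k (x - z) := hk _ _ h1
      have qq : q z ≤ q (σ z) := hq _ _ h2
      nlinarith [hqnn z, hqnn (σ z)]
  have hmono : (∫ z, (k (x - z) * q z + k (x - σ z) * q (σ z))) ≤
      ∫ z, (k (y - z) * q z + k (y - σ z) * q (σ z)) :=
    integral_mono ((hint x).add hfσ) ((hint y).add hgσ) key
  rw [integral_add (hint x) hfσ, integral_add (hint y) hgσ, hfσint, hgσint] at hmono
  show (∫ z, k (x - z) * q z) ≤ ∫ z, k (y - z) * q z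
  linarith
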